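/- In the setting of a 16-periodic mod-2 cohomology ring with minimal period 16, periodicity element x, Sq^1 = Sq^2 = 0, and Sq^i(x) = x y_i for i ∈ {4,8,12}: Sq^4 y_8 = y_{12}. -/
import Mathlib


/-- `x` is a nonzero homogeneous element of degree `k` such that multiplication
by `x` gives an isomorphism `A^i → A^{i+k}` for all `i ≥ 0`. -/
def InducesPeriodicity {A : Type*} [CommRing A] (𝒜 : ℕ → AddSubgroup A)
    (k : ℕ) (x : A) : Prop :=
  x ≠ 0 ∧ x ∈ 𝒜 k ∧
    (∀ i : ℕ, ∀ a ∈ 𝒜 i, x * a = 0 → a = 0) ∧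
    (∀ i : ℕ, ∀ b ∈ 𝒜 (i + k), ∃ a ∈ 𝒜 i, x * a = b)

/-- In the setting of a 16-periodic mod-2 cohomology ring with
minimal period 16, periodicity element `x`, `Sq^1 = Sq^2 = 0`, and
`Sq^i(x) = x·yᵢ` for `i ∈ {4, 8, 12}`:  `Sq^4 y₈ = y₁₂`.  (The Adem relation
`Sq^12 = Sq^4 Sq^8` — valid modulo terms involving `Sq^1, Sq^2` — and the
product vanishings `yᵢ yⱼ = 0` are included as hypotheses.) -/
theorem stmt15 {A : Type*} [CommRing A] (h2 : ∀ u : A, u + u = 0)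
    (𝒜 : ℕ → AddSubgroup A) [GradedRing 𝒜] (Sq : ℕ → A → A)
    (hSq_mem : ∀ (i j : ℕ) (u : A), u ∈ 𝒜 i → Sq j u ∈ 𝒜 (i + j))
    (hSq_add : ∀ (j : ℕ) (u v : A), Sq j (u + v) = Sq j u + Sq j v)
    (hSq_zero' : ∀ (i j : ℕ) (u : A), u ∈ 𝒜 i → i < j → Sq j u = 0)
    (hSq_sq : ∀ (i : ℕ) (u : A), u ∈ 𝒜 i → Sq i u = u ^ 2)
    (hSq0 : ∀ u : A, Sq 0 u = u)
    (hCartan : ∀ (n : ℕ) (u v : A),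
      Sq n (u * v) = ∑ h ∈ Finset.range (n + 1), Sq h u * Sq (n - h) v)
    (hSq1 : ∀ u : A, Sq 1 u = 0) (hSq2 : ∀ u : A, Sq 2 u = 0)
    (hAdem412 : ∀ u : A, Sq 12 u = Sq 4 (Sq 8 u))
    (x : A) (hx : InducesPeriodicity 𝒜 16 x)
    (hmin : ∀ k' : ℕ, ∀ x' : A, 0 < k' → InducesPeriodicity 𝒜 k' x' → 16 ≤ k')
    (y : ℕ → A) (hy_mem : ∀ i ∈ ({4, 8, 12} : Finset ℕ), y i ∈ 𝒜 i)
    (hxy : ∀ i ∈ ({4, 8, 12} : Finset ℕ), Sq i x = x * y i)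
    (hprod : ∀ i ∈ ({4, 8, 12} : Finset ℕ), ∀ j ∈ ({4, 8, 12} : Finset ℕ),
      y i * y j = 0) :
    Sq 4 (y 8) = y 12 := by
  have hy8 : y 8 ∈ 𝒜 8 := hy_mem 8 (by simp)
  have hy12 : y 12 ∈ 𝒜 12 := hy_mem 12 (by simp)
  have hx8 : Sq 8 x = x * y 8 := hxy 8 (by simp)
  have hx12 : Sq 12 x = x * y 12 := hxy 12 (by simp)
  have hx4 : Sq 4 x = x * y 4 := hxy 4 (by simp)
  have h48 : y 4 * y 8 = 0 := hprod 4 (by simp) 8 (by simp)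
  have key : x * y 12 = x * Sq 4 (y 8) := by
    rw [← hx12, hAdem412, hx8, hCartan]
    simp [Finset.sum_range_succ, hSq0, hSq1, hSq2, hx4, mul_assoc, h48]
  have hmem : y 12 - Sq 4 (y 8) ∈ 𝒜 12 := by
    have := hSq_mem 8 4 (y 8) hy8
    exact AddSubgroup.sub_mem _ hy12 this
  have h0 : x * (y 12 - Sq 4 (y 8)) = 0 := by
    rw [mul_sub, key, sub_self]
  have := hx.2.2.1 12 _ hmem h0
  exact (sub_eq_zero.mp this).symm
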